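/- Let p be a prime, n ≥ 1, r ≥ 0, and x = (x_0,…,x_{n−1}) ∈ 𝔽_p^n. Let nummax^{(r)}(x) ∈ 𝔽_p be the r-th base-p digit of the number of indices i with x_i = max(x). Then nummax^{(r)}(x) = Σ_{k=1}^{n} k^{(r)} · Σ_{I ⊆ {0,…,n−1}, |I| = k} Σ_{t=0}^{p−1} ( Π_{i ∈ I} δ_t(x_i) · Π_{j ∉ I} L_t(x_j) ) in 𝔽_p, where δ_t(z) = 1 − (z − t)^{p−1}, L_t(z) = Σ_{m=0}^{t−1} ( 1 − (z − m)^{p−1} ), and k^{(r)} ∈ {0,…,p−1} ⊆ 𝔽_p is the r-th digit of the base-p expansion of the integer k. -/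

import Mathlib

/-- The maximum of the components of `x`, where elements of `ZMod p` are
compared via their canonical natural-number representatives. -/
def fmax {p n : ℕ} (x : Fin n → ZMod p) : ZMod p :=
  ((Finset.univ.sup fun i => (x i).val : ℕ) : ZMod p)

/-- The least index `i` with `x i = fmax x`, as a natural number. -/
noncomputable def argmaxN {p n : ℕ} (x : Fin n → ZMod p) : ℕ :=
  sInf {i : ℕ | ∃ h : i < n, x ⟨i, h⟩ = fmax x}

/-- The `r`-th digit of the base-`p` expansion of `k`, as an element of `ZMod p`. -/
def digitP (p k r : ℕ) : ZMod p := (((k / p ^ r) % p : ℕ) : ZMod p)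

/-- Polynomial expression of the low-pass function `χ(z < t)`. -/
def Lp (p t : ℕ) (z : ZMod p) : ZMod p :=
  ∑ k ∈ Finset.range t, (1 - (z - (k : ZMod p)) ^ (p - 1))

/-- Polynomial expression of the Kronecker delta `χ(z = t)`. -/
def deltaP (p t : ℕ) (z : ZMod p) : ZMod p := 1 - (z - (t : ZMod p)) ^ (p - 1)

theorem nummax_digit_formula (p n r : ℕ) (hp : p.Prime) (hn : 1 ≤ n)
    (x : Fin n → ZMod p) :
    digitP p ((Finset.univ.filter fun i => x i = fmax x).card) r =
      ∑ k ∈ Finset.Icc 1 n, digitP p k r *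
        ∑ I ∈ Finset.powersetCard k (Finset.univ : Finset (Fin n)),
          ∑ t ∈ Finset.range p,
            ((∏ i ∈ I, deltaP p t (x i)) * ∏ j ∈ Iᶜ, Lp p t (x j)) := by
  haveI : Fact p.Prime := ⟨hp⟩
  haveI : NeZero n := ⟨Nat.one_le_iff_ne_zero.mp hn⟩
  have hp1 : 1 < p := hp.one_lt
  have hp0 : 0 < p := hp.pos
  set N : ℕ := Finset.univ.sup (fun i => (x i).val) with hN
  set S : Finset (Fin n) := Finset.univ.filter (fun i => x i = fmax x) with hS
  have hNlt : N < p := by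
    refine (Finset.sup_lt_iff hp0).mpr fun i _ => ZMod.val_lt _
  have hfmax : fmax x = (N : ZMod p) := rfl
  have hMval : (fmax x).val = N := by
    rw [hfmax, ZMod.val_cast_of_lt hNlt]
  have hz_eq : ∀ (t : ℕ) (z : ZMod p), t < p → ((z = (t : ZMod p)) ↔ z.val = t) := by
    intro t z ht
    constructor
    · intro h; rw [h, ZMod.val_cast_of_lt ht]
    · intro h; rw [← h, ZMod.natCast_val, ZMod.cast_id]
  have hdelta : ∀ (t : ℕ) (z : ZMod p), deltaP p t z = if z = (t : ZMod p) then 1 else 0 := by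
    intro t z
    by_cases h : z = (t : ZMod p)
    · simp [deltaP, h, zero_pow, Nat.sub_ne_zero_of_lt hp1]
    · simp [deltaP, h, ZMod.pow_card_sub_one_eq_one (sub_ne_zero.mpr h)]
  have hLp : ∀ (t : ℕ) (z : ZMod p), t ≤ p → Lp p t z = if z.val < t then 1 else 0 := by
    intro t z ht
    unfold Lp
    have h1 : ∀ k ∈ Finset.range t, (1 - (z - (k : ZMod p)) ^ (p - 1))
        = if z.val = k then (1 : ZMod p) else 0 := by
      intro k hk
      have hkp : k < p := lt_of_lt_of_le (Finset.mem_range.mp hk) ht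
      rw [show (1 - (z - (k : ZMod p)) ^ (p - 1)) = deltaP p k z from rfl, hdelta]
      simp [hz_eq k z hkp]
    rw [Finset.sum_congr rfl h1, Finset.sum_ite_eq]
    simp
  -- S is nonempty
  have hSmem : ∃ i, x i = fmax x := by
    obtain ⟨i, _, hi⟩ := Finset.exists_mem_eq_sup (Finset.univ : Finset (Fin n))
      Finset.univ_nonempty (fun i => (x i).val)
    exact ⟨i, by rw [hfmax, hN, hi, ZMod.natCast_val, ZMod.cast_id]⟩
  have hScard : S.card ∈ Finset.Icc 1 n := by
    obtain ⟨i, hi⟩ := hSmem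
    refine Finset.mem_Icc.mpr ⟨Finset.card_pos.mpr ⟨i, by simp [hS, hi]⟩, ?_⟩
    exact le_trans (Finset.card_filter_le _ _) (by simp)
  -- rewrite the summand
  have key : ∀ k ∈ Finset.Icc 1 n,
      (∑ I ∈ Finset.powersetCard k (Finset.univ : Finset (Fin n)),
          ∑ t ∈ Finset.range p,
            ((∏ i ∈ I, deltaP p t (x i)) * ∏ j ∈ Iᶜ, Lp p t (x j)))
        = if S.card = k then 1 else 0 := by
    intro k hk
    have hk1 : 1 ≤ k := (Finset.mem_Icc.mp hk).1
    have hI : ∀ I ∈ Finset.powersetCard k (Finset.univ : Finset (Fin n)),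
        (∑ t ∈ Finset.range p,
            ((∏ i ∈ I, deltaP p t (x i)) * ∏ j ∈ Iᶜ, Lp p t (x j)))
          = if I = S then 1 else 0 := by
      intro I hIm
      have hIcard : I.card = k := (Finset.mem_powersetCard.mp hIm).2
      have hIne : I.Nonempty := Finset.card_pos.mp (by omega)
      have ht : ∀ t ∈ Finset.range p,
          ((∏ i ∈ I, deltaP p t (x i)) * ∏ j ∈ Iᶜ, Lp p t (x j))
            = if I = S ∧ N = t then 1 else 0 := by
        intro t htm
        have htp : t < p := Finset.mem_range.mp htm
        have e1 : (∏ i ∈ I, deltaP p t (x i))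
            = if ∀ i ∈ I, x i = (t : ZMod p) then 1 else 0 := by
          rw [Finset.prod_congr rfl (fun i _ => hdelta t (x i)), Finset.prod_boole]
          simp
        have e2 : (∏ j ∈ Iᶜ, Lp p t (x j))
            = if ∀ j ∈ Iᶜ, (x j).val < t then 1 else 0 := by
          rw [Finset.prod_congr rfl (fun j _ => hLp t (x j) htp.le), Finset.prod_boole]
          simp
        rw [e1, e2, ite_mul, one_mul, zero_mul, ← ite_and]
        congr 1
        simp only [eq_iff_iff]
        constructor
        · rintro ⟨h1, h2⟩
          obtain ⟨i0, hi0⟩ := hIne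
          have hNt : N = t := by
            have hle : N ≤ t := by
              refine Finset.sup_le fun i _ => ?_
              by_cases hiI : i ∈ I
              · rw [(hz_eq t (x i) htp).mp (h1 i hiI)]
              · exact (h2 i (Finset.mem_compl.mpr hiI)).le
            have hge : t ≤ N := by
              have h3 := Finset.le_sup (f := fun i => (x i).val) (Finset.mem_univ i0)
              rw [(hz_eq t (x i0) htp).mp (h1 i0 hi0)] at h3
              exact h3
            omega
          refine ⟨?_, hNt⟩
          ext i
          simp only [hS, Finset.mem_filter, Finset.mem_univ, true_and, hfmax, hNt]
          constructor
          · intro hiI; exact h1 i hiI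
          · intro hxi
            by_contra hiI
            have := h2 i (Finset.mem_compl.mpr hiI)
            rw [(hz_eq t (x i) htp).mp hxi] at this
            omega
        · rintro ⟨h1, h2⟩
          subst h1
          constructor
          · intro i hiS
            have : x i = fmax x := (Finset.mem_filter.mp hiS).2
            rw [this, hfmax, h2]
          · intro j hjS
            have hxne : x j ≠ fmax x := by
              intro h
              exact (Finset.mem_compl.mp hjS) (Finset.mem_filter.mpr ⟨Finset.mem_univ j, h⟩)
            have hle : (x j).val ≤ N := Finset.le_sup (f := fun i => (x i).val) (Finset.mem_univ j)
            have hne : (x j).val ≠ N := by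
              intro h
              apply hxne
              rw [hfmax, ← h, ZMod.natCast_val, ZMod.cast_id]
            omega
      rw [Finset.sum_congr rfl ht]
      by_cases hIS : I = S
      · simp only [hIS, true_and]
        rw [Finset.sum_ite_eq]
        simp [Finset.mem_range.mpr hNlt]
      · simp [hIS]
    rw [Finset.sum_congr rfl hI, Finset.sum_ite_eq']
    have : S ∈ Finset.powersetCard k (Finset.univ : Finset (Fin n)) ↔ S.card = k := by
      simp [Finset.mem_powersetCard]
    by_cases h : S.card = k <;> simp [this, h]
  rw [Finset.sum_congr rfl (fun k hk => by rw [key k hk])]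
  rw [Finset.sum_congr rfl (fun k _ => (mul_ite _ _ _ _).trans (by rw [mul_one, mul_zero]))]
  rw [Finset.sum_ite_eq]
  simp [hScard]
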